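/- Let (η, ϕ) be a smooth solution of the two-dimensional water-wave system on [0,T]. Then the energy 𝓗(t) := (g/2)∫₀^{L₁} η(t,x)² dx + (1/2)∬_{Ω(t)} ((∂ₓϕ)² + (∂_yϕ)²)(t,x,y) dx dy is independent of t ∈ [0,T]. -/

import Mathlib

open Real Set MeasureTheory

noncomputable section

/-- `∂ₓϕ(t,x,y)` -/
def phiX (ϕ : ℝ → ℝ → ℝ → ℝ) (t x y : ℝ) : ℝ := deriv (fun x' => ϕ t x' y) x

/-- `∂_yϕ(t,x,y)` -/
def phiY (ϕ : ℝ → ℝ → ℝ → ℝ) (t x y : ℝ) : ℝ := deriv (fun y' => ϕ t x y') y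

/-- `∂ₜϕ(t,x,y)` -/
def phiT (ϕ : ℝ → ℝ → ℝ → ℝ) (t x y : ℝ) : ℝ := deriv (fun s => ϕ s x y) t

/-- `∂ₓη(t,x)` -/
def etaX (η : ℝ → ℝ → ℝ) (t x : ℝ) : ℝ := deriv (fun x' => η t x') x

/-- `∂ₜη(t,x)` -/
def etaT (η : ℝ → ℝ → ℝ) (t x : ℝ) : ℝ := deriv (fun s => η s x) t

/-- the trace `ψ(t,x) = ϕ(t,x,η(t,x))` -/
def psi (η : ℝ → ℝ → ℝ) (ϕ : ℝ → ℝ → ℝ → ℝ) (t x : ℝ) : ℝ := ϕ t x (η t x)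

/-- `∂ₜψ(t,x)` -/
def psiT (η : ℝ → ℝ → ℝ) (ϕ : ℝ → ℝ → ℝ → ℝ) (t x : ℝ) : ℝ :=
  deriv (fun s => psi η ϕ s x) t

/-- `∂ₓψ(t,x)` -/
def psiX (η : ℝ → ℝ → ℝ) (ϕ : ℝ → ℝ → ℝ → ℝ) (t x : ℝ) : ℝ :=
  deriv (fun x' => psi η ϕ t x') x

/-- `Θ(t,x) = -η ∂ₜψ - (g/2) η²` -/
def Theta (g : ℝ) (η : ℝ → ℝ → ℝ) (ϕ : ℝ → ℝ → ℝ → ℝ) (t x : ℝ) : ℝ :=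
  -(η t x) * psiT η ϕ t x - g / 2 * (η t x) ^ 2

/-- the energy `𝓗(t)` -/
def energy2D (L₁ h g : ℝ) (η : ℝ → ℝ → ℝ) (ϕ : ℝ → ℝ → ℝ → ℝ) (t : ℝ) : ℝ :=
  g / 2 * (∫ x in (0:ℝ)..L₁, (η t x) ^ 2)
    + 1 / 2 * ∫ x in (0:ℝ)..L₁, ∫ y in (-h)..(η t x),
        ((phiX ϕ t x y) ^ 2 + (phiY ϕ t x y) ^ 2)

/-- A smooth solution of the two-dimensional water-wave system on `[0,T]`:
`η : [0,T] × [0,L₁] → ℝ` and `ϕ` on the fluid domain (both given as smooth total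
functions), satisfying the incompressibility, boundary, kinematic and Bernoulli
(dynamic) conditions, together with `η ≥ -h/2`, zero mean, and the right-angle
contact conditions `∂ₓη(t,0) = ∂ₓη(t,L₁) = 0`. -/
structure IsWW2D (L₁ h g T : ℝ) (η : ℝ → ℝ → ℝ) (ϕ : ℝ → ℝ → ℝ → ℝ) : Prop where
  smooth_eta : ContDiff ℝ (⊤ : ℕ∞) (fun p : ℝ × ℝ => η p.1 p.2)
  smooth_phi : ContDiff ℝ (⊤ : ℕ∞) (fun p : ℝ × ℝ × ℝ => ϕ p.1 p.2.1 p.2.2)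
  eta_lower : ∀ t ∈ Icc (0:ℝ) T, ∀ x ∈ Icc (0:ℝ) L₁, -h / 2 ≤ η t x
  eta_mean : ∀ t ∈ Icc (0:ℝ) T, (∫ x in (0:ℝ)..L₁, η t x) = 0
  laplace : ∀ t ∈ Icc (0:ℝ) T, ∀ x ∈ Icc (0:ℝ) L₁, ∀ y ∈ Icc (-h) (η t x),
    deriv (fun x' => phiX ϕ t x' y) x + deriv (fun y' => phiY ϕ t x y') y = 0
  bc_left : ∀ t ∈ Icc (0:ℝ) T, ∀ y ∈ Icc (-h) (η t 0), phiX ϕ t 0 y = 0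
  bc_right : ∀ t ∈ Icc (0:ℝ) T, ∀ y ∈ Icc (-h) (η t L₁), phiX ϕ t L₁ y = 0
  bc_bottom : ∀ t ∈ Icc (0:ℝ) T, ∀ x ∈ Icc (0:ℝ) L₁, phiY ϕ t x (-h) = 0
  kinematic : ∀ t ∈ Icc (0:ℝ) T, ∀ x ∈ Icc (0:ℝ) L₁,
    etaT η t x = phiY ϕ t x (η t x) - etaX η t x * phiX ϕ t x (η t x)
  bernoulli : ∀ t ∈ Icc (0:ℝ) T, ∀ x ∈ Icc (0:ℝ) L₁,
    phiT ϕ t x (η t x)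
      + 1 / 2 * ((phiX ϕ t x (η t x)) ^ 2 + (phiY ϕ t x (η t x)) ^ 2) + g * η t x = 0
  etaX_left : ∀ t ∈ Icc (0:ℝ) T, etaX η t 0 = 0
  etaX_right : ∀ t ∈ Icc (0:ℝ) T, etaX η t L₁ = 0

set_option maxHeartbeats 4000000

section Helpers

variable {E : Type*} [NormedAddCommGroup E] [NormedSpace ℝ E]

/-- directional (partial) derivative -/
def pd (Φ : E → ℝ) (v : E) (p : E) : ℝ := fderiv ℝ Φ p v

lemma pd_contDiff {Φ : E → ℝ} (hΦ : ContDiff ℝ (⊤ : ℕ∞) Φ) (v : E) :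
    ContDiff ℝ (⊤ : ℕ∞) (pd Φ v) :=
  (hΦ.fderiv_right (by norm_cast)).clm_apply contDiff_const

lemma hasDerivAt_comp_curve {Φ : E → ℝ} (hΦ : ContDiff ℝ (⊤ : ℕ∞) Φ)
    {c : ℝ → E} {c' : E} {t : ℝ} (hc : HasDerivAt c c' t) :
    HasDerivAt (fun s => Φ (c s)) (fderiv ℝ Φ (c t) c') t :=
  (hΦ.differentiable (by norm_cast) (c t)).hasFDerivAt.comp_hasDerivAt t hc

lemma pd_comm {Φ : E → ℝ} (hΦ : ContDiff ℝ (⊤ : ℕ∞) Φ) (v w p : E) :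
    pd (pd Φ v) w p = pd (pd Φ w) v p := by
  have hd : ∀ y, HasFDerivAt Φ (fderiv ℝ Φ y) y :=
    fun y => (hΦ.differentiable (by norm_cast) y).hasFDerivAt
  have h2 : HasFDerivAt (fderiv ℝ Φ) (fderiv ℝ (fderiv ℝ Φ) p) p :=
    (((hΦ.fderiv_right (m := ((⊤:ℕ∞) : WithTop ℕ∞)) (by norm_cast)).differentiable (by norm_cast)) p).hasFDerivAt
  have e1 : ∀ v w : E, pd (pd Φ v) w p = (fderiv ℝ (fderiv ℝ Φ) p) w v := by
    intro v w
    have h3 : HasFDerivAt (fun q => fderiv ℝ Φ q v)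
        ((fderiv ℝ (fderiv ℝ Φ) p).flip v) p := by
      have := h2.clm_apply (hasFDerivAt_const v p)
      simpa using this
    have h4 : HasFDerivAt (pd Φ v) ((fderiv ℝ (fderiv ℝ Φ) p).flip v) p := h3
    show fderiv ℝ (pd Φ v) p w = _
    rw [h4.fderiv]; rfl
  rw [e1, e1, second_derivative_symmetric hd h2 v w]

/-- Leibniz rule for interval integrals with smooth integrand and fixed endpoints. -/
lemma hasDerivAt_param_integral {G : ℝ → ℝ → ℝ}
    (hG : ContDiff ℝ (⊤ : ℕ∞) (fun p : ℝ × ℝ => G p.1 p.2)) (a b t₀ : ℝ) :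
    HasDerivAt (fun t => ∫ x in a..b, G t x)
      (∫ x in a..b, pd (fun p : ℝ × ℝ => G p.1 p.2) (1, 0) (t₀, x)) t₀ := by
  set Φ := fun p : ℝ × ℝ => G p.1 p.2 with hΦdef
  have hΦc : Continuous Φ := hG.continuous
  have hpdc : Continuous (pd Φ (1, 0)) := (pd_contDiff hG (1, 0)).continuous
  obtain ⟨C, hC⟩ := (isCompact_Icc (a := t₀ - 1) (b := t₀ + 1)).prod
    (isCompact_uIcc (a := a) (b := b)) |>.exists_bound_of_continuousOn
    hpdc.continuousOn
  have key := intervalIntegral.hasDerivAt_integral_of_dominated_loc_of_deriv_le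
    (F := fun t x => G t x) (F' := fun t x => pd Φ (1, 0) (t, x))
    (x₀ := t₀) (a := a) (b := b) (μ := volume) (bound := fun _ => C)
    (Metric.ball_mem_nhds t₀ one_pos)
    (Filter.Eventually.of_forall fun t =>
      (hΦc.comp (continuous_const.prodMk continuous_id)).aestronglyMeasurable)
    ((hΦc.comp (continuous_const.prodMk continuous_id)).intervalIntegrable a b)
    ((hpdc.comp (continuous_const.prodMk continuous_id)).aestronglyMeasurable)
    (Filter.Eventually.of_forall fun x hx t ht => by
      apply hC
      constructor
      · have := Metric.mem_ball.mp ht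
        have := abs_lt.mp (by simpa [Real.dist_eq] using this)
        constructor <;> linarith [this.1, this.2]
      · exact Set.uIoc_subset_uIcc hx)
    (intervalIntegrable_const)
    (Filter.Eventually.of_forall fun x hx t ht =>
      hasDerivAt_comp_curve hG ((hasDerivAt_id t).prodMk (hasDerivAt_const t x)))
  exact key.2

/-- Flattening substitution: `∫_a^c f = (c-a)∫₀¹ f(a+s(c-a)) ds`. -/
lemma integral_flatten {f : ℝ → ℝ} (hf : Continuous f) (a c : ℝ) :
    ∫ y in a..c, f y = (c - a) * ∫ s in (0:ℝ)..1, f (a + s * (c - a)) := by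
  have h := intervalIntegral.integral_comp_smul_deriv
    (f := fun s : ℝ => a + s * (c - a)) (f' := fun _ : ℝ => c - a) (g := f)
    (a := 0) (b := 1)
    (fun s _ => ((hasDerivAt_mul_const (c - a)).const_add a))
    continuousOn_const hf
  simp only [zero_mul, add_zero, one_mul, smul_eq_mul, Function.comp] at h
  have ha : a + (c - a) = c := by ring
  rw [ha] at h
  rw [← h, intervalIntegral.integral_const_mul]

/-- Leibniz rule with moving upper boundary, for smooth data. -/
lemma hasDerivAt_moving_integral {F : ℝ → ℝ → ℝ}
    (hF : ContDiff ℝ (⊤ : ℕ∞) (fun p : ℝ × ℝ => F p.1 p.2))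
    {u : ℝ → ℝ} (hu : ContDiff ℝ (⊤ : ℕ∞) u) (a t₀ : ℝ) :
    HasDerivAt (fun t => ∫ y in a..u t, F t y)
      (deriv u t₀ * F t₀ (u t₀)
        + ∫ y in a..u t₀, pd (fun p : ℝ × ℝ => F p.1 p.2) (1, 0) (t₀, y)) t₀ := by
  set Φ := fun p : ℝ × ℝ => F p.1 p.2 with hΦdef
  have hΦc : Continuous Φ := hF.continuous
  set Ft := pd Φ (1, 0) with hFt
  set Fy := pd Φ (0, 1) with hFy
  have hFtc : Continuous Ft := (pd_contDiff hF _).continuous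
  have hFyc : Continuous Fy := (pd_contDiff hF _).continuous
  have hud : HasDerivAt u (deriv u t₀) t₀ :=
    (hu.differentiable (by norm_cast) t₀).hasDerivAt
  set u' := deriv u t₀ with hu'
  set U := u t₀ with hU
  -- the flattened integrand
  set G := fun (t s : ℝ) => F t (a + s * (u t - a)) with hGdef
  have hG : ContDiff ℝ (⊤ : ℕ∞) (fun p : ℝ × ℝ => G p.1 p.2) := by
    have hg : ContDiff ℝ (⊤ : ℕ∞)
        (fun p : ℝ × ℝ => ((p.1, a + p.2 * (u p.1 - a)) : ℝ × ℝ)) :=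
      contDiff_fst.prodMk (contDiff_const.add (contDiff_snd.mul
        ((hu.comp contDiff_fst).sub contDiff_const)))
    exact hF.comp hg
  -- identification of the two presentations
  have hflat : ∀ t, ∫ y in a..u t, F t y = (u t - a) * ∫ s in (0:ℝ)..1, G t s := by
    intro t
    exact integral_flatten (hF.continuous.comp (continuous_const.prodMk continuous_id)) a (u t)
  -- derivative of the inner parametric integral
  have hM : HasDerivAt (fun t => ∫ s in (0:ℝ)..1, G t s)
      (∫ s in (0:ℝ)..1, pd (fun p : ℝ × ℝ => G p.1 p.2) (1, 0) (t₀, s)) t₀ :=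
    hasDerivAt_param_integral hG 0 1 t₀
  -- identify the t-partial of G
  have hGt : ∀ s : ℝ, pd (fun p : ℝ × ℝ => G p.1 p.2) (1, 0) (t₀, s)
      = Ft (t₀, a + s * (U - a)) + (s * u') * Fy (t₀, a + s * (U - a)) := by
    intro s
    have hc : HasDerivAt (fun τ => (τ, a + s * (u τ - a)) : ℝ → ℝ × ℝ)
        (1, s * u') t₀ := by
      refine (hasDerivAt_id t₀).prodMk ?_
      simpa using ((hud.sub_const a).const_mul s).const_add a
    have h1 : HasDerivAt (fun τ => G τ s) (fderiv ℝ Φ (t₀, a + s * (U - a)) (1, s * u')) t₀ :=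
      hasDerivAt_comp_curve hF hc
    have h2 : HasDerivAt (fun τ => G τ s)
        (pd (fun p : ℝ × ℝ => G p.1 p.2) (1, 0) (t₀, s)) t₀ := by
      have := hasDerivAt_comp_curve hG ((hasDerivAt_id t₀).prodMk (hasDerivAt_const t₀ s))
      simpa [pd] using this
    rw [h2.unique h1]
    have hvec : ((1 : ℝ), s * u') = ((1 : ℝ), (0 : ℝ)) + (s * u') • ((0 : ℝ), (1 : ℝ)) := by
      simp
    rw [hvec, (fderiv ℝ Φ (t₀, a + s * (U - a))).map_add,
      (fderiv ℝ Φ (t₀, a + s * (U - a))).map_smul]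
    simp [hFt, hFy, pd, smul_eq_mul]
  -- abbreviations for the three inner integrals
  set m1 := ∫ s in (0:ℝ)..1, F t₀ (a + s * (U - a)) with hm1
  set m2 := ∫ s in (0:ℝ)..1, s * Fy (t₀, a + s * (U - a)) with hm2
  set m3 := ∫ s in (0:ℝ)..1, Ft (t₀, a + s * (U - a)) with hm3
  have hcury : Continuous (fun s : ℝ => a + s * (U - a)) :=
    continuous_const.add (continuous_id.mul continuous_const)
  have hcont1 : Continuous fun s : ℝ => F t₀ (a + s * (U - a)) :=
    hΦc.comp (continuous_const.prodMk hcury)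
  have hcontFy : Continuous fun s : ℝ => Fy (t₀, a + s * (U - a)) :=
    hFyc.comp (continuous_const.prodMk hcury)
  have hcont2 : Continuous fun s : ℝ => s * Fy (t₀, a + s * (U - a)) :=
    continuous_id.mul hcontFy
  have hcont3 : Continuous fun s : ℝ => Ft (t₀, a + s * (U - a)) :=
    hFtc.comp (continuous_const.prodMk hcury)
  -- FTC in s : m1 + (U - a) * m2 = F t₀ U
  have hftc : m1 + (U - a) * m2 = F t₀ U := by
    have hder : ∀ s ∈ uIcc (0:ℝ) 1,
        HasDerivAt (fun s : ℝ => s * F t₀ (a + s * (U - a)))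
          (F t₀ (a + s * (U - a)) + s * ((U - a) * Fy (t₀, a + s * (U - a)))) s := by
      intro s _
      have hc : HasDerivAt (fun s => (t₀, a + s * (U - a)) : ℝ → ℝ × ℝ) (0, U - a) s := by
        refine (hasDerivAt_const s t₀).prodMk ?_
        simpa using (hasDerivAt_mul_const (U - a)).const_add a
      have hinner : HasDerivAt (fun s : ℝ => F t₀ (a + s * (U - a)))
          ((U - a) * Fy (t₀, a + s * (U - a))) s := by
        have := hasDerivAt_comp_curve hF hc
        have hvec : ((0:ℝ), U - a) = (U - a) • ((0:ℝ), (1:ℝ)) := by simp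
        rw [hvec, (fderiv ℝ Φ _).map_smul] at this
        simpa [hFy, pd, smul_eq_mul] using this
      have := (hasDerivAt_id' s).mul hinner
      simp only [one_mul] at this
      exact this
    have := intervalIntegral.integral_eq_sub_of_hasDerivAt hder
      ((hcont1.add (continuous_id.mul (continuous_const.mul hcontFy))).intervalIntegrable 0 1)
    simp only [one_mul, zero_mul, sub_zero] at this
    have ha : a + (U - a) = U := by ring
    rw [ha] at this
    rw [← this, hm1, hm2]
    rw [← intervalIntegral.integral_const_mul, ← intervalIntegral.integral_add
      (hcont1.intervalIntegrable 0 1)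
      ((show Continuous fun s => (U - a) * (s * Fy (t₀, a + s * (U - a))) from continuous_const.mul hcont2).intervalIntegrable 0 1)]
    apply intervalIntegral.integral_congr
    intro s _
    ring
  -- substitution for the Ft term
  have hsub : (U - a) * m3 = ∫ y in a..U, Ft (t₀, y) := by
    rw [integral_flatten (f := fun y => Ft (t₀, y))
      (hFtc.comp (continuous_const.prodMk continuous_id)) a U, hm3]
  -- assemble
  have hJ : HasDerivAt (fun t => (u t - a) * ∫ s in (0:ℝ)..1, G t s)
      (u' * m1 + (U - a) * (m3 + u' * m2)) t₀ := by
    have hMval : (∫ s in (0:ℝ)..1, pd (fun p : ℝ × ℝ => G p.1 p.2) (1, 0) (t₀, s))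
        = m3 + u' * m2 := by
      rw [intervalIntegral.integral_congr (g := fun s =>
        Ft (t₀, a + s * (U - a)) + u' * (s * Fy (t₀, a + s * (U - a))))
        (fun s _ => by rw [hGt s]; ring)]
      rw [intervalIntegral.integral_add (hcont3.intervalIntegrable 0 1)
        ((show Continuous fun s => u' * (s * Fy (t₀, a + s * (U - a))) from continuous_const.mul hcont2).intervalIntegrable 0 1),
        intervalIntegral.integral_const_mul]
    have hm1' : (∫ s in (0:ℝ)..1, G t₀ s) = m1 := rfl
    have := (hud.sub_const a).mul hM
    rw [hMval, hm1'] at this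
    exact this
  have hfun : (fun t => ∫ y in a..u t, F t y)
      = fun t => (u t - a) * ∫ s in (0:ℝ)..1, G t s := funext hflat
  rw [hfun]
  have hval : u' * F t₀ U + (∫ y in a..U, Ft (t₀, y)) = u' * m1 + (U - a) * (m3 + u' * m2) := by
    rw [← hsub, ← hftc]; ring
  rw [hval]
  exact hJ

lemma hasDerivAt_pd_line {Φ : E → ℝ} (hΦ : ContDiff ℝ (⊤ : ℕ∞) Φ) (v p : E) :
    HasDerivAt (fun s : ℝ => Φ (p + s • v)) (pd Φ v p) 0 := by
  have hc : HasDerivAt (fun s : ℝ => p + s • v) v 0 := by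
    simpa using ((hasDerivAt_id (0 : ℝ)).smul_const v).const_add p
  have := hasDerivAt_comp_curve hΦ hc
  simpa [pd] using this

lemma pd_add {f g : E → ℝ} (hf : ContDiff ℝ (⊤ : ℕ∞) f) (hg : ContDiff ℝ (⊤ : ℕ∞) g)
    (v p : E) : pd (fun q => f q + g q) v p = pd f v p + pd g v p := by
  have h3 := (hasDerivAt_pd_line hf v p).add (hasDerivAt_pd_line hg v p)
  exact (hasDerivAt_pd_line (hf.add hg) v p).unique h3

lemma pd_mul {f g : E → ℝ} (hf : ContDiff ℝ (⊤ : ℕ∞) f) (hg : ContDiff ℝ (⊤ : ℕ∞) g)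
    (v p : E) : pd (fun q => f q * g q) v p = pd f v p * g p + f p * pd g v p := by
  have h3 := (hasDerivAt_pd_line hf v p).mul (hasDerivAt_pd_line hg v p)
  simp only [zero_smul, add_zero] at h3
  exact (hasDerivAt_pd_line (hf.mul hg) v p).unique h3

lemma pd_sq {f : E → ℝ} (hf : ContDiff ℝ (⊤ : ℕ∞) f) (v p : E) :
    pd (fun q => f q ^ 2) v p = 2 * f p * pd f v p := by
  have h3 := (hasDerivAt_pd_line hf v p).pow 2
  simp only [zero_smul, add_zero, Nat.cast_ofNat, pow_one] at h3
  have := (hasDerivAt_pd_line (hf.pow 2) v p).unique h3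
  rw [this]; ring

section Ident


variable {ϕ : ℝ → ℝ → ℝ → ℝ}

lemma phiX_eq (hΦ : ContDiff ℝ (⊤ : ℕ∞) (fun p : ℝ × ℝ × ℝ => ϕ p.1 p.2.1 p.2.2)) (t x y : ℝ) : phiX ϕ t x y
    = pd (fun p : ℝ × ℝ × ℝ => ϕ p.1 p.2.1 p.2.2) (0, 1, 0) (t, x, y) := by
  have hc : HasDerivAt (fun x' : ℝ => ((t, x', y) : ℝ × ℝ × ℝ)) (0, 1, 0) x :=
    (hasDerivAt_const x t).prodMk ((hasDerivAt_id x).prodMk (hasDerivAt_const x y))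
  have hd : HasDerivAt (fun x' => ϕ t x' y)
      (pd (fun p : ℝ × ℝ × ℝ => ϕ p.1 p.2.1 p.2.2) (0, 1, 0) (t, x, y)) x :=
    hasDerivAt_comp_curve hΦ hc
  exact hd.deriv

lemma phiY_eq (hΦ : ContDiff ℝ (⊤ : ℕ∞) (fun p : ℝ × ℝ × ℝ => ϕ p.1 p.2.1 p.2.2)) (t x y : ℝ) : phiY ϕ t x y
    = pd (fun p : ℝ × ℝ × ℝ => ϕ p.1 p.2.1 p.2.2) (0, 0, 1) (t, x, y) := by
  have hc : HasDerivAt (fun y' : ℝ => ((t, x, y') : ℝ × ℝ × ℝ)) (0, 0, 1) y :=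
    (hasDerivAt_const y t).prodMk ((hasDerivAt_const y x).prodMk (hasDerivAt_id y))
  exact (hasDerivAt_comp_curve hΦ hc (c := fun y' : ℝ => ((t, x, y') : ℝ × ℝ × ℝ))).deriv

lemma phiT_eq (hΦ : ContDiff ℝ (⊤ : ℕ∞) (fun p : ℝ × ℝ × ℝ => ϕ p.1 p.2.1 p.2.2)) (t x y : ℝ) : phiT ϕ t x y
    = pd (fun p : ℝ × ℝ × ℝ => ϕ p.1 p.2.1 p.2.2) (1, 0, 0) (t, x, y) := by
  have hc : HasDerivAt (fun s : ℝ => ((s, x, y) : ℝ × ℝ × ℝ)) (1, 0, 0) t :=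
    (hasDerivAt_id t).prodMk ((hasDerivAt_const t x).prodMk (hasDerivAt_const t y))
  exact (hasDerivAt_comp_curve hΦ hc (c := fun s : ℝ => ((s, x, y) : ℝ × ℝ × ℝ))).deriv

end Ident

section Ident2

variable {η : ℝ → ℝ → ℝ}

lemma etaX_eq (hN : ContDiff ℝ (⊤ : ℕ∞) (fun p : ℝ × ℝ => η p.1 p.2)) (t x : ℝ) : etaX η t x
    = pd (fun p : ℝ × ℝ => η p.1 p.2) (0, 1) (t, x) := by
  have hc : HasDerivAt (fun x' : ℝ => ((t, x') : ℝ × ℝ)) (0, 1) x :=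
    (hasDerivAt_const x t).prodMk (hasDerivAt_id x)
  exact (hasDerivAt_comp_curve hN hc (c := fun x' : ℝ => ((t, x') : ℝ × ℝ))).deriv

lemma etaT_eq (hN : ContDiff ℝ (⊤ : ℕ∞) (fun p : ℝ × ℝ => η p.1 p.2)) (t x : ℝ) : etaT η t x
    = pd (fun p : ℝ × ℝ => η p.1 p.2) (1, 0) (t, x) := by
  have hc : HasDerivAt (fun s : ℝ => ((s, x) : ℝ × ℝ)) (1, 0) t :=
    (hasDerivAt_id t).prodMk (hasDerivAt_const t x)
  exact (hasDerivAt_comp_curve hN hc (c := fun s : ℝ => ((s, x) : ℝ × ℝ))).deriv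

end Ident2

end Helpers

/-- conservation of the energy `𝓗(t)` for two-dimensional waves. -/
theorem energy_conservation_2d
    (L₁ h g T : ℝ) (hL : 0 < L₁) (hh : 0 < h) (hg : 0 < g) (hT : 0 < T)
    (η : ℝ → ℝ → ℝ) (ϕ : ℝ → ℝ → ℝ → ℝ) (hsol : IsWW2D L₁ h g T η ϕ) :
    ∀ t ∈ Icc (0:ℝ) T, energy2D L₁ h g η ϕ t = energy2D L₁ h g η ϕ 0 := by
  have hN := hsol.smooth_eta
  have hΦ := hsol.smooth_phi
  set N : ℝ × ℝ → ℝ := fun p => η p.1 p.2 with hNdef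
  set Φ : ℝ × ℝ × ℝ → ℝ := fun p => ϕ p.1 p.2.1 p.2.2 with hΦdef
  set PX : ℝ × ℝ × ℝ → ℝ := pd Φ (0, 1, 0) with hPXdef
  set PY : ℝ × ℝ × ℝ → ℝ := pd Φ (0, 0, 1) with hPYdef
  set PT : ℝ × ℝ × ℝ → ℝ := pd Φ (1, 0, 0) with hPTdef
  set NX : ℝ × ℝ → ℝ := pd N (0, 1) with hNXdef
  set NT : ℝ × ℝ → ℝ := pd N (1, 0) with hNTdef
  have hPX : ContDiff ℝ (⊤ : ℕ∞) PX := pd_contDiff hΦ _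
  have hPY : ContDiff ℝ (⊤ : ℕ∞) PY := pd_contDiff hΦ _
  have hPT : ContDiff ℝ (⊤ : ℕ∞) PT := pd_contDiff hΦ _
  have hNX : ContDiff ℝ (⊤ : ℕ∞) NX := pd_contDiff hN _
  have hNT : ContDiff ℝ (⊤ : ℕ∞) NT := pd_contDiff hN _
  set EE : ℝ × ℝ × ℝ → ℝ := fun p => PX p ^ 2 + PY p ^ 2 with hEEdef
  have hEE : ContDiff ℝ (⊤ : ℕ∞) EE := (hPX.pow 2).add (hPY.pow 2)
  set ET : ℝ × ℝ × ℝ → ℝ := pd EE (1, 0, 0) with hETdef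
  have hET : ContDiff ℝ (⊤ : ℕ∞) ET := pd_contDiff hEE _
  set PTX : ℝ × ℝ × ℝ → ℝ := fun p => PT p * PX p with hPTXdef
  set PTY : ℝ × ℝ × ℝ → ℝ := fun p => PT p * PY p with hPTYdef
  have hPTX : ContDiff ℝ (⊤ : ℕ∞) PTX := hPT.mul hPX
  have hPTY : ContDiff ℝ (⊤ : ℕ∞) PTY := hPT.mul hPY
  set W : ℝ → ℝ → ℝ := fun t x => ∫ y in (-h)..(N (t, x)), EE (t, x, y) with hWdef
  set DW : ℝ → ℝ → ℝ := fun t x =>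
    NT (t, x) * EE (t, x, N (t, x)) + ∫ y in (-h)..(N (t, x)), ET (t, x, y) with hDWdef
  -- rewriting the energy
  have hEnergy : ∀ t : ℝ, energy2D L₁ h g η ϕ t
      = g / 2 * (∫ x in (0:ℝ)..L₁, (η t x) ^ 2) + 1 / 2 * ∫ x in (0:ℝ)..L₁, W t x := by
    intro t
    have hxy : ∀ x y : ℝ, (phiX ϕ t x y) ^ 2 + (phiY ϕ t x y) ^ 2 = EE (t, x, y) := by
      intro x y
      rw [hEEdef, hPXdef, hPYdef, hΦdef]
      rw [phiX_eq hΦ, phiY_eq hΦ]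
    simp only [energy2D, hxy, hWdef]
    rfl
  -- t-derivative of the first part
  have hA : ∀ t₀ : ℝ, HasDerivAt (fun t => ∫ x in (0:ℝ)..L₁, (η t x) ^ 2)
      (∫ x in (0:ℝ)..L₁, 2 * η t₀ x * NT (t₀, x)) t₀ := by
    intro t₀
    have h1 := hasDerivAt_param_integral (G := fun t x => (η t x) ^ 2) (hN.pow 2) 0 L₁ t₀
    have h2 : ∀ x : ℝ, pd (fun p : ℝ × ℝ => (η p.1 p.2) ^ 2) (1, 0) (t₀, x)
        = 2 * η t₀ x * NT (t₀, x) := by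
      intro x
      rw [pd_sq hN (1, 0) (t₀, x)]
    rwa [intervalIntegral.integral_congr (fun x _ => h2 x)] at h1
  -- derivative in t of the moving inner integral, for fixed x
  have hWt : ∀ (t₀ x : ℝ), HasDerivAt (fun t => W t x) (DW t₀ x) t₀ := by
    intro t₀ x
    have hFsm : ContDiff ℝ (⊤ : ℕ∞) (fun q : ℝ × ℝ => EE (q.1, x, q.2)) :=
      hEE.comp (contDiff_fst.prodMk (contDiff_const.prodMk contDiff_snd))
    have husm : ContDiff ℝ (⊤ : ℕ∞) (fun t : ℝ => N (t, x)) :=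
      hN.comp (contDiff_id.prodMk contDiff_const)
    have h1 := hasDerivAt_moving_integral (F := fun t y => EE (t, x, y)) hFsm husm (-h) t₀
    have hder : HasDerivAt (fun t : ℝ => N (t, x)) (NT (t₀, x)) t₀ :=
      hasDerivAt_comp_curve hN ((hasDerivAt_id t₀).prodMk (hasDerivAt_const t₀ x))
    have h2 : ∀ y : ℝ, pd (fun q : ℝ × ℝ => EE (q.1, x, q.2)) (1, 0) (t₀, y)
        = ET (t₀, x, y) := by
      intro y
      have ha : HasDerivAt (fun s : ℝ => EE (s, x, y))
          (pd (fun q : ℝ × ℝ => EE (q.1, x, q.2)) (1, 0) (t₀, y)) t₀ := by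
        have := hasDerivAt_comp_curve hFsm
          ((hasDerivAt_id t₀).prodMk (hasDerivAt_const t₀ y))
        simpa [pd] using this
      have hb : HasDerivAt (fun s : ℝ => EE (s, x, y)) (ET (t₀, x, y)) t₀ := by
        have := hasDerivAt_comp_curve hEE
          ((hasDerivAt_id t₀).prodMk ((hasDerivAt_const t₀ x).prodMk (hasDerivAt_const t₀ y)))
        simpa [hETdef, pd] using this
      exact ha.unique hb
    rw [hder.deriv, intervalIntegral.integral_congr (fun y _ => h2 y)] at h1
    exact h1
  -- joint continuity facts
  have hWcont : Continuous (fun q : ℝ × ℝ => W q.1 q.2) := by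
    apply intervalIntegral.continuous_parametric_intervalIntegral_of_continuous
      (f := fun (q : ℝ × ℝ) (y : ℝ) => EE (q.1, q.2, y)) (s := fun q : ℝ × ℝ => N q)
    · exact hEE.continuous.comp ((continuous_fst.comp continuous_fst).prodMk
        ((continuous_snd.comp continuous_fst).prodMk continuous_snd))
    · exact hN.continuous
  have hIETcont : Continuous (fun q : ℝ × ℝ => ∫ y in (-h)..(N q), ET (q.1, q.2, y)) := by
    apply intervalIntegral.continuous_parametric_intervalIntegral_of_continuous
      (f := fun (q : ℝ × ℝ) (y : ℝ) => ET (q.1, q.2, y)) (s := fun q : ℝ × ℝ => N q)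
    · exact hET.continuous.comp ((continuous_fst.comp continuous_fst).prodMk
        ((continuous_snd.comp continuous_fst).prodMk continuous_snd))
    · exact hN.continuous
  have hDWcont : Continuous (fun q : ℝ × ℝ => DW q.1 q.2) := by
    apply Continuous.add
    · exact (hNT.continuous).mul (hEE.continuous.comp
        (continuous_fst.prodMk (continuous_snd.prodMk hN.continuous)))
    · exact hIETcont
  -- derivative of the second part, by dominated differentiation
  have hB : ∀ t₀ : ℝ, HasDerivAt (fun t => ∫ x in (0:ℝ)..L₁, W t x)
      (∫ x in (0:ℝ)..L₁, DW t₀ x) t₀ := by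
    intro t₀
    obtain ⟨C, hC⟩ := ((isCompact_Icc (a := t₀ - 1) (b := t₀ + 1)).prod
      (isCompact_uIcc (a := (0:ℝ)) (b := L₁))).exists_bound_of_continuousOn
      hDWcont.continuousOn
    have key := intervalIntegral.hasDerivAt_integral_of_dominated_loc_of_deriv_le
      (F := fun t x => W t x) (F' := fun t x => DW t x) (x₀ := t₀)
      (a := 0) (b := L₁) (μ := volume) (bound := fun _ => C) (Metric.ball_mem_nhds t₀ one_pos)
      (Filter.Eventually.of_forall fun t =>
        ((hWcont.comp (continuous_const.prodMk continuous_id)).aestronglyMeasurable))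
      ((hWcont.comp (continuous_const.prodMk continuous_id)).intervalIntegrable 0 L₁)
      ((hDWcont.comp (continuous_const.prodMk continuous_id)).aestronglyMeasurable)
      (Filter.Eventually.of_forall fun x hx t ht => by
        have hball := abs_lt.mp (by simpa [Real.dist_eq] using Metric.mem_ball.mp ht)
        show ‖DW t x‖ ≤ C
        exact hC (t, x) ⟨⟨by linarith [hball.1], by linarith [hball.2]⟩,
          Set.uIoc_subset_uIcc hx⟩)
      intervalIntegrable_const
      (Filter.Eventually.of_forall fun x hx t ht => hWt t x)
    exact key.2
  -- total derivative of the energy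
  have hHd : ∀ t₀ : ℝ, HasDerivAt (energy2D L₁ h g η ϕ)
      (g / 2 * (∫ x in (0:ℝ)..L₁, 2 * η t₀ x * NT (t₀, x))
        + 1 / 2 * ∫ x in (0:ℝ)..L₁, DW t₀ x) t₀ := by
    intro t₀
    have : energy2D L₁ h g η ϕ = fun t =>
        g / 2 * (∫ x in (0:ℝ)..L₁, (η t x) ^ 2) + 1 / 2 * ∫ x in (0:ℝ)..L₁, W t x :=
      funext hEnergy
    rw [this]
    exact ((hA t₀).const_mul (g / 2)).add ((hB t₀).const_mul (1 / 2))
  -- the PDE input: the derivative vanishes on [0, T]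
  have hzero : ∀ t₀ ∈ Icc (0:ℝ) T,
      g / 2 * (∫ x in (0:ℝ)..L₁, 2 * η t₀ x * NT (t₀, x))
        + 1 / 2 * (∫ x in (0:ℝ)..L₁, DW t₀ x) = 0 := by
    intro t₀ ht₀
    have hL' : (0:ℝ) ≤ L₁ := le_of_lt hL
    have huIccL : uIcc (0:ℝ) L₁ = Icc 0 L₁ := uIcc_of_le hL'
    have hlow : ∀ x ∈ Icc (0:ℝ) L₁, -h ≤ N (t₀, x) := fun x hx => by
      have := hsol.eta_lower t₀ ht₀ x hx
      have h2 : -h ≤ -h / 2 := by linarith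
      exact le_trans h2 this
    have hsurf : Continuous (fun x : ℝ => N (t₀, x)) :=
      hN.continuous.comp (continuous_const.prodMk continuous_id)
    -- translated PDE facts
    have hkin : ∀ x ∈ Icc (0:ℝ) L₁,
        NT (t₀, x) = PY (t₀, x, N (t₀, x)) - NX (t₀, x) * PX (t₀, x, N (t₀, x)) := by
      intro x hx
      have hk := hsol.kinematic t₀ ht₀ x hx
      rw [etaT_eq hN, etaX_eq hN, phiX_eq hΦ, phiY_eq hΦ] at hk
      exact hk
    have hber : ∀ x ∈ Icc (0:ℝ) L₁,
        PT (t₀, x, N (t₀, x)) + 1 / 2 * EE (t₀, x, N (t₀, x)) + g * η t₀ x = 0 := by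
      intro x hx
      have hb := hsol.bernoulli t₀ ht₀ x hx
      rw [phiT_eq hΦ, phiX_eq hΦ, phiY_eq hΦ] at hb
      exact hb
    have hlap : ∀ x ∈ Icc (0:ℝ) L₁, ∀ y ∈ Icc (-h) (N (t₀, x)),
        pd PX (0, 1, 0) (t₀, x, y) + pd PY (0, 0, 1) (t₀, x, y) = 0 := by
      intro x hx y hy
      have hl := hsol.laplace t₀ ht₀ x hx y hy
      have e1 : deriv (fun x' => phiX ϕ t₀ x' y) x = pd PX (0, 1, 0) (t₀, x, y) := by
        have hfun : (fun x' => phiX ϕ t₀ x' y) = fun x' => PX (t₀, x', y) :=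
          funext fun x' => phiX_eq hΦ t₀ x' y
        rw [hfun]
        have hc : HasDerivAt (fun x' : ℝ => ((t₀, x', y) : ℝ × ℝ × ℝ)) (0, 1, 0) x :=
          (hasDerivAt_const x t₀).prodMk ((hasDerivAt_id x).prodMk (hasDerivAt_const x y))
        exact (hasDerivAt_comp_curve hPX hc (c := fun x' : ℝ => ((t₀, x', y) : ℝ × ℝ × ℝ))).deriv
      have e2 : deriv (fun y' => phiY ϕ t₀ x y') y = pd PY (0, 0, 1) (t₀, x, y) := by
        have hfun : (fun y' => phiY ϕ t₀ x y') = fun y' => PY (t₀, x, y') :=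
          funext fun y' => phiY_eq hΦ t₀ x y'
        rw [hfun]
        have hc : HasDerivAt (fun y' : ℝ => ((t₀, x, y') : ℝ × ℝ × ℝ)) (0, 0, 1) y :=
          (hasDerivAt_const y t₀).prodMk ((hasDerivAt_const y x).prodMk (hasDerivAt_id y))
        exact (hasDerivAt_comp_curve hPY hc (c := fun y' : ℝ => ((t₀, x, y') : ℝ × ℝ × ℝ))).deriv
      rw [e1, e2] at hl
      exact hl
    -- ET as a divergence on the fluid domain
    have hETdiv : ∀ x ∈ Icc (0:ℝ) L₁, ∀ y ∈ Icc (-h) (N (t₀, x)),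
        ET (t₀, x, y) = 2 * (pd PTX (0, 1, 0) (t₀, x, y) + pd PTY (0, 0, 1) (t₀, x, y)) := by
      intro x hx y hy
      have e0 : ET (t₀, x, y) = pd (fun q => PX q ^ 2) (1, 0, 0) (t₀, x, y)
          + pd (fun q => PY q ^ 2) (1, 0, 0) (t₀, x, y) :=
        pd_add (hPX.pow 2) (hPY.pow 2) (1, 0, 0) (t₀, x, y)
      have h1 : ET (t₀, x, y) = 2 * PX (t₀, x, y) * pd PX (1, 0, 0) (t₀, x, y)
          + 2 * PY (t₀, x, y) * pd PY (1, 0, 0) (t₀, x, y) := by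
        rw [e0, pd_sq hPX, pd_sq hPY]
      have c1 : pd PX (1, 0, 0) (t₀, x, y) = pd PT (0, 1, 0) (t₀, x, y) :=
        pd_comm hΦ (0, 1, 0) (1, 0, 0) (t₀, x, y)
      have c2 : pd PY (1, 0, 0) (t₀, x, y) = pd PT (0, 0, 1) (t₀, x, y) :=
        pd_comm hΦ (0, 0, 1) (1, 0, 0) (t₀, x, y)
      have m1 : pd PTX (0, 1, 0) (t₀, x, y)
          = pd PT (0, 1, 0) (t₀, x, y) * PX (t₀, x, y) + PT (t₀, x, y) * pd PX (0, 1, 0) (t₀, x, y) :=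
        pd_mul hPT hPX (0, 1, 0) (t₀, x, y)
      have m2 : pd PTY (0, 0, 1) (t₀, x, y)
          = pd PT (0, 0, 1) (t₀, x, y) * PY (t₀, x, y) + PT (t₀, x, y) * pd PY (0, 0, 1) (t₀, x, y) :=
        pd_mul hPT hPY (0, 0, 1) (t₀, x, y)
      have hl := hlap x hx y hy
      rw [h1, c1, c2, m1, m2]
      linear_combination (-2 * PT (t₀, x, y)) * hl
    -- bottom boundary
    have hbot : ∀ x ∈ Icc (0:ℝ) L₁, PTY (t₀, x, -h) = 0 := by
      intro x hx
      have hb := hsol.bc_bottom t₀ ht₀ x hx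
      rw [phiY_eq hΦ] at hb
      have hb' : PY (t₀, x, -h) = 0 := hb
      show PT (t₀, x, -h) * PY (t₀, x, -h) = 0
      rw [hb', mul_zero]
    -- FTC in y for PTY
    have hFTCy : ∀ x : ℝ, (∫ y in (-h)..(N (t₀, x)), pd PTY (0, 0, 1) (t₀, x, y))
        = PTY (t₀, x, N (t₀, x)) - PTY (t₀, x, -h) := by
      intro x
      have hderiv : ∀ y ∈ uIcc (-h) (N (t₀, x)),
          HasDerivAt (fun y' => PTY (t₀, x, y')) (pd PTY (0, 0, 1) (t₀, x, y)) y := by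
        intro y _
        have hc : HasDerivAt (fun y' : ℝ => ((t₀, x, y') : ℝ × ℝ × ℝ)) (0, 0, 1) y :=
          (hasDerivAt_const y t₀).prodMk ((hasDerivAt_const y x).prodMk (hasDerivAt_id y))
        exact hasDerivAt_comp_curve hPTY hc (c := fun y' : ℝ => ((t₀, x, y') : ℝ × ℝ × ℝ))
      have hint : IntervalIntegrable (fun y => pd PTY (0, 0, 1) (t₀, x, y))
          volume (-h) (N (t₀, x)) :=
        ((pd_contDiff hPTY _).continuous.comp
          (continuous_const.prodMk (continuous_const.prodMk continuous_id))).intervalIntegrable _ _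
      exact intervalIntegral.integral_eq_sub_of_hasDerivAt hderiv hint
    -- moving-boundary derivative in x
    have hKx : ∀ x : ℝ, HasDerivAt (fun x' => ∫ y in (-h)..(N (t₀, x')), PTX (t₀, x', y))
        (NX (t₀, x) * PTX (t₀, x, N (t₀, x))
          + ∫ y in (-h)..(N (t₀, x)), pd PTX (0, 1, 0) (t₀, x, y)) x := by
      intro x
      have hFsm : ContDiff ℝ (⊤ : ℕ∞) (fun q : ℝ × ℝ => PTX (t₀, q.1, q.2)) :=
        hPTX.comp (contDiff_const.prodMk (contDiff_fst.prodMk contDiff_snd))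
      have husm : ContDiff ℝ (⊤ : ℕ∞) (fun x' : ℝ => N (t₀, x')) :=
        hN.comp (contDiff_const.prodMk contDiff_id)
      have h1 := hasDerivAt_moving_integral (F := fun x' y => PTX (t₀, x', y)) hFsm husm (-h) x
      have hder : HasDerivAt (fun x' : ℝ => N (t₀, x')) (NX (t₀, x)) x :=
        hasDerivAt_comp_curve hN ((hasDerivAt_const x t₀).prodMk (hasDerivAt_id x))
      have h2 : ∀ y : ℝ, pd (fun q : ℝ × ℝ => PTX (t₀, q.1, q.2)) (1, 0) (x, y)
          = pd PTX (0, 1, 0) (t₀, x, y) := by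
        intro y
        have ha : HasDerivAt (fun x' : ℝ => PTX (t₀, x', y))
            (pd (fun q : ℝ × ℝ => PTX (t₀, q.1, q.2)) (1, 0) (x, y)) x := by
          have := hasDerivAt_comp_curve hFsm ((hasDerivAt_id x).prodMk (hasDerivAt_const x y))
          simpa [pd] using this
        have hb : HasDerivAt (fun x' : ℝ => PTX (t₀, x', y)) (pd PTX (0, 1, 0) (t₀, x, y)) x := by
          have hc : HasDerivAt (fun x' : ℝ => ((t₀, x', y) : ℝ × ℝ × ℝ)) (0, 1, 0) x :=
            (hasDerivAt_const x t₀).prodMk ((hasDerivAt_id x).prodMk (hasDerivAt_const x y))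
          exact hasDerivAt_comp_curve hPTX hc (c := fun x' : ℝ => ((t₀, x', y) : ℝ × ℝ × ℝ))
        exact ha.unique hb
      rw [hder.deriv, intervalIntegral.integral_congr (fun y _ => h2 y)] at h1
      exact h1
    -- continuity of the x-derivative above
    have hDK1 : Continuous (fun x => NX (t₀, x) * PTX (t₀, x, N (t₀, x))) :=
      (hNX.continuous.comp (continuous_const.prodMk continuous_id)).mul
        (hPTX.continuous.comp (continuous_const.prodMk (continuous_id.prodMk hsurf)))
    have hDK2 : Continuous (fun x => ∫ y in (-h)..(N (t₀, x)), pd PTX (0, 1, 0) (t₀, x, y)) := by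
      apply intervalIntegral.continuous_parametric_intervalIntegral_of_continuous
        (f := fun (x : ℝ) (y : ℝ) => pd PTX (0, 1, 0) (t₀, x, y)) (s := fun x : ℝ => N (t₀, x))
      · exact (pd_contDiff hPTX _).continuous.comp
          (continuous_const.prodMk (continuous_fst.prodMk continuous_snd))
      · exact hsurf
    have hDKcont : Continuous (fun x => NX (t₀, x) * PTX (t₀, x, N (t₀, x))
        + ∫ y in (-h)..(N (t₀, x)), pd PTX (0, 1, 0) (t₀, x, y)) := hDK1.add hDK2
    -- FTC in x
    have hFTCx : (∫ x in (0:ℝ)..L₁, (NX (t₀, x) * PTX (t₀, x, N (t₀, x))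
          + ∫ y in (-h)..(N (t₀, x)), pd PTX (0, 1, 0) (t₀, x, y)))
        = (∫ y in (-h)..(N (t₀, L₁)), PTX (t₀, L₁, y))
          - (∫ y in (-h)..(N (t₀, 0)), PTX (t₀, 0, y)) :=
      intervalIntegral.integral_eq_sub_of_hasDerivAt (fun x _ => hKx x)
        (hDKcont.intervalIntegrable 0 L₁)
    -- vanishing side contributions
    have hKL : (∫ y in (-h)..(N (t₀, L₁)), PTX (t₀, L₁, y)) = 0 := by
      have hmem : L₁ ∈ Icc (0:ℝ) L₁ := ⟨hL', le_refl _⟩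
      have hcong : EqOn (fun y => PTX (t₀, L₁, y)) (fun _ => (0:ℝ))
          (uIcc (-h) (N (t₀, L₁))) := by
        intro y hy
        rw [uIcc_of_le (hlow L₁ hmem)] at hy
        have hb := hsol.bc_right t₀ ht₀ y hy
        rw [phiX_eq hΦ] at hb
        have hb' : PX (t₀, L₁, y) = 0 := hb
        show PT (t₀, L₁, y) * PX (t₀, L₁, y) = 0
        rw [hb', mul_zero]
      rw [intervalIntegral.integral_congr hcong, intervalIntegral.integral_zero]
    have hK0 : (∫ y in (-h)..(N (t₀, 0)), PTX (t₀, 0, y)) = 0 := by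
      have hmem : (0:ℝ) ∈ Icc (0:ℝ) L₁ := ⟨le_refl _, hL'⟩
      have hcong : EqOn (fun y => PTX (t₀, 0, y)) (fun _ => (0:ℝ))
          (uIcc (-h) (N (t₀, 0))) := by
        intro y hy
        rw [uIcc_of_le (hlow 0 hmem)] at hy
        have hb := hsol.bc_left t₀ ht₀ y hy
        rw [phiX_eq hΦ] at hb
        have hb' : PX (t₀, 0, y) = 0 := hb
        show PT (t₀, 0, y) * PX (t₀, 0, y) = 0
        rw [hb', mul_zero]
      rw [intervalIntegral.integral_congr hcong, intervalIntegral.integral_zero]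
    -- inner integral identity
    have hinner : ∀ x ∈ Icc (0:ℝ) L₁,
        (∫ y in (-h)..(N (t₀, x)), ET (t₀, x, y))
          = 2 * (∫ y in (-h)..(N (t₀, x)), pd PTX (0, 1, 0) (t₀, x, y))
            + 2 * PTY (t₀, x, N (t₀, x)) := by
      intro x hx
      have hle : -h ≤ N (t₀, x) := hlow x hx
      have hc1 : Continuous fun y => 2 * pd PTX (0, 1, 0) (t₀, x, y) :=
        continuous_const.mul ((pd_contDiff hPTX _).continuous.comp
          (continuous_const.prodMk (continuous_const.prodMk continuous_id)))
      have hc2 : Continuous fun y => 2 * pd PTY (0, 0, 1) (t₀, x, y) :=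
        continuous_const.mul ((pd_contDiff hPTY _).continuous.comp
          (continuous_const.prodMk (continuous_const.prodMk continuous_id)))
      have hcong : EqOn (fun y => ET (t₀, x, y))
          (fun y => 2 * pd PTX (0, 1, 0) (t₀, x, y) + 2 * pd PTY (0, 0, 1) (t₀, x, y))
          (uIcc (-h) (N (t₀, x))) := by
        intro y hy
        rw [uIcc_of_le hle] at hy
        show ET (t₀, x, y) = 2 * pd PTX (0, 1, 0) (t₀, x, y) + 2 * pd PTY (0, 0, 1) (t₀, x, y)
        rw [hETdiv x hx y hy]
        ring
      rw [intervalIntegral.integral_congr hcong,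
        intervalIntegral.integral_add (hc1.intervalIntegrable _ _) (hc2.intervalIntegrable _ _),
        intervalIntegral.integral_const_mul, intervalIntegral.integral_const_mul,
        hFTCy x, hbot x hx]
      ring
    -- x-integration of the inner integral (Green identity)
    have houter : (∫ x in (0:ℝ)..L₁, ∫ y in (-h)..(N (t₀, x)), ET (t₀, x, y))
        = ∫ x in (0:ℝ)..L₁, (2 * PTY (t₀, x, N (t₀, x))
            - 2 * NX (t₀, x) * PTX (t₀, x, N (t₀, x))) := by
      have hcong : EqOn (fun x => ∫ y in (-h)..(N (t₀, x)), ET (t₀, x, y))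
          (fun x => 2 * (NX (t₀, x) * PTX (t₀, x, N (t₀, x))
              + ∫ y in (-h)..(N (t₀, x)), pd PTX (0, 1, 0) (t₀, x, y))
            + (2 * PTY (t₀, x, N (t₀, x)) - 2 * NX (t₀, x) * PTX (t₀, x, N (t₀, x))))
          (uIcc 0 L₁) := by
        intro x hx
        rw [huIccL] at hx
        show (∫ y in (-h)..(N (t₀, x)), ET (t₀, x, y))
          = 2 * (NX (t₀, x) * PTX (t₀, x, N (t₀, x))
              + ∫ y in (-h)..(N (t₀, x)), pd PTX (0, 1, 0) (t₀, x, y))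
            + (2 * PTY (t₀, x, N (t₀, x)) - 2 * NX (t₀, x) * PTX (t₀, x, N (t₀, x)))
        rw [hinner x hx]
        ring
      have hi1 : IntervalIntegrable (fun x => 2 * (NX (t₀, x) * PTX (t₀, x, N (t₀, x))
          + ∫ y in (-h)..(N (t₀, x)), pd PTX (0, 1, 0) (t₀, x, y))) volume 0 L₁ :=
        (continuous_const.mul hDKcont).intervalIntegrable 0 L₁
      have hPTYs : Continuous (fun x => PTY (t₀, x, N (t₀, x))) :=
        hPTY.continuous.comp (continuous_const.prodMk (continuous_id.prodMk hsurf))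
      have hPTXs' : Continuous (fun x => PTX (t₀, x, N (t₀, x))) :=
        hPTX.continuous.comp (continuous_const.prodMk (continuous_id.prodMk hsurf))
      have hNXx' : Continuous (fun x : ℝ => NX (t₀, x)) :=
        hNX.continuous.comp (continuous_const.prodMk continuous_id)
      have hi2 : IntervalIntegrable (fun x => 2 * PTY (t₀, x, N (t₀, x))
          - 2 * NX (t₀, x) * PTX (t₀, x, N (t₀, x))) volume 0 L₁ :=
        ((continuous_const.mul hPTYs).sub
          ((continuous_const.mul hNXx').mul hPTXs')).intervalIntegrable 0 L₁
      rw [intervalIntegral.integral_congr hcong, intervalIntegral.integral_add hi1 hi2,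
        intervalIntegral.integral_const_mul, hFTCx, hKL, hK0]
      ring
    -- split the DW integral
    have hIETx : Continuous (fun x : ℝ => ∫ y in (-h)..(N (t₀, x)), ET (t₀, x, y)) :=
      hIETcont.comp (continuous_const.prodMk continuous_id)
    have hEEs : Continuous (fun x => EE (t₀, x, N (t₀, x))) :=
      hEE.continuous.comp (continuous_const.prodMk (continuous_id.prodMk hsurf))
    have hNTx : Continuous (fun x : ℝ => NT (t₀, x)) :=
      hNT.continuous.comp (continuous_const.prodMk continuous_id)
    have hDWsplit : (∫ x in (0:ℝ)..L₁, DW t₀ x)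
        = (∫ x in (0:ℝ)..L₁, NT (t₀, x) * EE (t₀, x, N (t₀, x)))
          + ∫ x in (0:ℝ)..L₁, ∫ y in (-h)..(N (t₀, x)), ET (t₀, x, y) := by
      simp only [hDWdef]
      exact intervalIntegral.integral_add ((hNTx.mul hEEs).intervalIntegrable 0 L₁)
        (hIETx.intervalIntegrable 0 L₁)
    rw [hDWsplit, houter]
    -- convert the whole expression into a single integral
    have e1 : g / 2 * (∫ x in (0:ℝ)..L₁, 2 * η t₀ x * NT (t₀, x))
        = ∫ x in (0:ℝ)..L₁, g * η t₀ x * NT (t₀, x) := by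
      rw [← intervalIntegral.integral_const_mul]
      apply intervalIntegral.integral_congr
      intro x _
      ring
    have e2 : (1:ℝ) / 2 * (∫ x in (0:ℝ)..L₁, NT (t₀, x) * EE (t₀, x, N (t₀, x)))
        = ∫ x in (0:ℝ)..L₁, 1 / 2 * (NT (t₀, x) * EE (t₀, x, N (t₀, x))) :=
      (intervalIntegral.integral_const_mul _ _).symm
    have e3 : (1:ℝ) / 2 * (∫ x in (0:ℝ)..L₁, (2 * PTY (t₀, x, N (t₀, x))
          - 2 * NX (t₀, x) * PTX (t₀, x, N (t₀, x))))
        = ∫ x in (0:ℝ)..L₁, (PTY (t₀, x, N (t₀, x))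
            - NX (t₀, x) * PTX (t₀, x, N (t₀, x))) := by
      rw [← intervalIntegral.integral_const_mul]
      apply intervalIntegral.integral_congr
      intro x _
      ring
    have hEta : Continuous (fun x : ℝ => η t₀ x) :=
      hN.continuous.comp (continuous_const.prodMk continuous_id)
    have hNXx : Continuous (fun x : ℝ => NX (t₀, x)) :=
      hNX.continuous.comp (continuous_const.prodMk continuous_id)
    have hPTXs : Continuous (fun x => PTX (t₀, x, N (t₀, x))) :=
      hPTX.continuous.comp (continuous_const.prodMk (continuous_id.prodMk hsurf))
    have hPTYs : Continuous (fun x => PTY (t₀, x, N (t₀, x))) :=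
      hPTY.continuous.comp (continuous_const.prodMk (continuous_id.prodMk hsurf))
    have i1 : IntervalIntegrable (fun x => g * η t₀ x * NT (t₀, x)) volume 0 L₁ :=
      ((continuous_const.mul hEta).mul hNTx).intervalIntegrable 0 L₁
    have i2 : IntervalIntegrable (fun x => 1 / 2 * (NT (t₀, x) * EE (t₀, x, N (t₀, x))))
        volume 0 L₁ :=
      (continuous_const.mul (hNTx.mul hEEs)).intervalIntegrable 0 L₁
    have i3 : IntervalIntegrable (fun x => PTY (t₀, x, N (t₀, x))
        - NX (t₀, x) * PTX (t₀, x, N (t₀, x))) volume 0 L₁ :=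
      (hPTYs.sub (hNXx.mul hPTXs)).intervalIntegrable 0 L₁
    rw [mul_add, e1, e2, e3, ← intervalIntegral.integral_add i2 i3,
      ← intervalIntegral.integral_add i1 (i2.add i3)]
    have hcong0 : EqOn (fun x => g * η t₀ x * NT (t₀, x)
        + (1 / 2 * (NT (t₀, x) * EE (t₀, x, N (t₀, x)))
          + (PTY (t₀, x, N (t₀, x)) - NX (t₀, x) * PTX (t₀, x, N (t₀, x)))))
        (fun _ => (0:ℝ)) (uIcc 0 L₁) := by
      intro x hx
      rw [huIccL] at hx
      have hk := hkin x hx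
      have hb := hber x hx
      show g * η t₀ x * NT (t₀, x)
        + (1 / 2 * (NT (t₀, x) * EE (t₀, x, N (t₀, x)))
          + (PT (t₀, x, N (t₀, x)) * PY (t₀, x, N (t₀, x))
            - NX (t₀, x) * (PT (t₀, x, N (t₀, x)) * PX (t₀, x, N (t₀, x))))) = 0
      linear_combination NT (t₀, x) * hb - PT (t₀, x, N (t₀, x)) * hk
    rw [intervalIntegral.integral_congr hcong0, intervalIntegral.integral_zero]
  -- conclude by constancy
  have hcont : ContinuousOn (energy2D L₁ h g η ϕ) (Icc 0 T) := fun t _ =>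
    ((hHd t).continuousAt.continuousWithinAt)
  have hconst := constant_of_has_deriv_right_zero hcont (fun t ht => by
    have h0 := hzero t ⟨ht.1, le_of_lt ht.2⟩
    have := hHd t
    rw [h0] at this
    exact this.hasDerivWithinAt)
  intro t ht
  exact hconst t ht
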